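/- Jump bound (Proposition 5.2): let U, Ũ ∈ G with associated pressures p, p̃ > 0, and let ℓ ∈ {1,2,3}. Then |B̃_ℓ − B_ℓ| / ( 2√((ρ + ρ̃)/2) ) ≤ (1/2)·α_ℓ(U,Ũ). -/

import Mathlib

open Finset

noncomputable section

/-- Internal energy density 𝓔(U) = E − |m|²/(2ρ) − |B|²/2 for U = (ρ,m,B,E) ∈ ℝ⁸. -/
def mhdE (U : Fin 8 → ℝ) : ℝ :=
  U 7 - (U 1 ^ 2 + U 2 ^ 2 + U 3 ^ 2) / (2 * U 0) - (U 4 ^ 2 + U 5 ^ 2 + U 6 ^ 2) / 2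

/-- The admissible state set G = {U : ρ > 0 ∧ 𝓔(U) > 0}. -/
def admG : Set (Fin 8 → ℝ) := {U | 0 < U 0 ∧ 0 < mhdE U}

/-- Velocity components v = m/ρ. -/
def vcomp (U : Fin 8 → ℝ) (i : Fin 3) : ℝ := ![U 1, U 2, U 3] i / U 0

/-- Magnetic field components. -/
def Bcomp (U : Fin 8 → ℝ) (i : Fin 3) : ℝ := ![U 4, U 5, U 6] i

/-- U · n*(v*,B*) where n*(v*,B*) = (|v*|²/2, −v*, −B*, 1). -/
def dotNstar (vs Bs : Fin 3 → ℝ) (U : Fin 8 → ℝ) : ℝ :=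
  U 0 * (vs 0 ^ 2 + vs 1 ^ 2 + vs 2 ^ 2) / 2
    - (U 1 * vs 0 + U 2 * vs 1 + U 3 * vs 2)
    - (U 4 * Bs 0 + U 5 * Bs 1 + U 6 * Bs 2) + U 7

/-- The ideal-MHD flux F_i(U;p). -/
def flux (i : Fin 3) (U : Fin 8 → ℝ) (p : ℝ) : Fin 8 → ℝ :=
  let v : Fin 3 → ℝ := fun j => ![U 1, U 2, U 3] j / U 0
  let B : Fin 3 → ℝ := ![U 4, U 5, U 6]
  let pt : ℝ := p + (B 0 ^ 2 + B 1 ^ 2 + B 2 ^ 2) / 2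
  ![U 0 * v i,
    v i * U 1 - B i * B 0 + (if i = 0 then pt else 0),
    v i * U 2 - B i * B 1 + (if i = 1 then pt else 0),
    v i * U 3 - B i * B 2 + (if i = 2 then pt else 0),
    v i * B 0 - B i * v 0,
    v i * B 1 - B i * v 1,
    v i * B 2 - B i * v 2,
    v i * (U 7 + pt) - B i * (v 0 * B 0 + v 1 * B 1 + v 2 * B 2)]

/-- 𝓒_s = p/(ρ√(2e)) with e = 𝓔(U)/ρ. -/
def Cs (U : Fin 8 → ℝ) (p : ℝ) : ℝ :=
  p / (U 0 * Real.sqrt (2 * (mhdE U / U 0)))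

/-- The speed 𝓒_i(U;p). -/
def Cfast (i : Fin 3) (U : Fin 8 → ℝ) (p : ℝ) : ℝ :=
  (1 / Real.sqrt 2) *
    Real.sqrt ((U 4 ^ 2 + U 5 ^ 2 + U 6 ^ 2) / U 0 + (Cs U p) ^ 2
      + Real.sqrt (((U 4 ^ 2 + U 5 ^ 2 + U 6 ^ 2) / U 0 + (Cs U p) ^ 2) ^ 2
          - 4 * (Bcomp U i) ^ 2 * (Cs U p) ^ 2 / U 0))

/-- The bound α_i(U,Ũ) of Lemma 2.2. -/
def alphaSpeed (i : Fin 3) (U Ut : Fin 8 → ℝ) (p pt : ℝ) : ℝ :=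
  max (max (|vcomp U i| + Cfast i U p) (|vcomp Ut i| + Cfast i Ut pt))
    (|Real.sqrt (U 0) * vcomp U i + Real.sqrt (Ut 0) * vcomp Ut i|
        / (Real.sqrt (U 0) + Real.sqrt (Ut 0))
      + max (Cfast i U p) (Cfast i Ut pt))
  + Real.sqrt ((Bcomp U 0 - Bcomp Ut 0) ^ 2 + (Bcomp U 1 - Bcomp Ut 1) ^ 2
      + (Bcomp U 2 - Bcomp Ut 2) ^ 2) / (Real.sqrt (U 0) + Real.sqrt (Ut 0))

/-- The Godunov–Powell source vector S(U) = (0, B, v, v·B). -/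
def srcS (U : Fin 8 → ℝ) : Fin 8 → ℝ :=
  ![0, U 4, U 5, U 6, U 1 / U 0, U 2 / U 0, U 3 / U 0,
    (U 1 * U 4 + U 2 * U 5 + U 3 * U 6) / U 0]

lemma Cfast_nonneg (ℓ : Fin 3) (U : Fin 8 → ℝ) (p : ℝ) : 0 ≤ Cfast ℓ U p := by
  unfold Cfast; positivity

lemma abs_Bcomp_le (ℓ : Fin 3) (U : Fin 8 → ℝ) (p : ℝ) (hρ : 0 < U 0) :
    |Bcomp U ℓ| ≤ Real.sqrt (U 0) * Cfast ℓ U p := by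
  have hbS : (Bcomp U ℓ) ^ 2 ≤ U 4 ^ 2 + U 5 ^ 2 + U 6 ^ 2 := by
    fin_cases ℓ <;> simp [Bcomp] <;>
      nlinarith [sq_nonneg (U 4), sq_nonneg (U 5), sq_nonneg (U 6)]
  set b : ℝ := Bcomp U ℓ with hbdef
  set S : ℝ := U 4 ^ 2 + U 5 ^ 2 + U 6 ^ 2 with hSdef
  set cs : ℝ := Cs U p with hcsdef
  set a : ℝ := S / U 0 + cs ^ 2 with hadef
  have hx : (0:ℝ) < (U 0)⁻¹ := inv_pos.2 hρ
  have h1 : 2 * b ^ 2 / U 0 - a ≤ Real.sqrt (a ^ 2 - 4 * b ^ 2 * cs ^ 2 / U 0) := by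
    calc 2 * b ^ 2 / U 0 - a ≤ |2 * b ^ 2 / U 0 - a| := le_abs_self _
      _ = Real.sqrt ((2 * b ^ 2 / U 0 - a) ^ 2) := (Real.sqrt_sq_eq_abs _).symm
      _ ≤ Real.sqrt (a ^ 2 - 4 * b ^ 2 * cs ^ 2 / U 0) := by
          apply Real.sqrt_le_sqrt
          have hkey : 0 ≤ b ^ 2 * ((U 0)⁻¹ * (U 0)⁻¹) * (S - b ^ 2) :=
            mul_nonneg (mul_nonneg (sq_nonneg b) (by positivity))
              (sub_nonneg.2 hbS)
          have ha : a = S * (U 0)⁻¹ + cs ^ 2 := by rw [hadef]; ring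
          rw [ha, div_eq_mul_inv, div_eq_mul_inv]
          nlinarith [hkey]
  have h2 : 2 * (b ^ 2 / U 0) ≤ a + Real.sqrt (a ^ 2 - 4 * b ^ 2 * cs ^ 2 / U 0) := by
    have : 2 * (b ^ 2 / U 0) = (2 * b ^ 2 / U 0 - a) + a := by ring
    linarith [h1]
  have hCf : Cfast ℓ U p =
      (1 / Real.sqrt 2) * Real.sqrt (a + Real.sqrt (a ^ 2 - 4 * b ^ 2 * cs ^ 2 / U 0)) := by
    rfl
  have h3 : Real.sqrt (2 * (b ^ 2 / U 0)) ≤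
      Real.sqrt (a + Real.sqrt (a ^ 2 - 4 * b ^ 2 * cs ^ 2 / U 0)) :=
    Real.sqrt_le_sqrt h2
  have h4 : Real.sqrt (2 * (b ^ 2 / U 0)) = Real.sqrt 2 * (|b| / Real.sqrt (U 0)) := by
    rw [Real.sqrt_mul (by norm_num : (0:ℝ) ≤ 2), Real.sqrt_div (sq_nonneg b),
      Real.sqrt_sq_eq_abs]
  have hs2 : (0:ℝ) < Real.sqrt 2 := Real.sqrt_pos.2 (by norm_num)
  have h5 : |b| / Real.sqrt (U 0) ≤ Cfast ℓ U p := by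
    rw [hCf]
    have := h3
    rw [h4] at this
    calc |b| / Real.sqrt (U 0)
        = (1 / Real.sqrt 2) * (Real.sqrt 2 * (|b| / Real.sqrt (U 0))) := by
          field_simp
      _ ≤ (1 / Real.sqrt 2) * Real.sqrt (a + Real.sqrt (a ^ 2 - 4 * b ^ 2 * cs ^ 2 / U 0)) := by
          apply mul_le_mul_of_nonneg_left this (by positivity)
  have hsρ : (0:ℝ) < Real.sqrt (U 0) := Real.sqrt_pos.2 hρ
  calc |b| = Real.sqrt (U 0) * (|b| / Real.sqrt (U 0)) := by field_simp
    _ ≤ Real.sqrt (U 0) * Cfast ℓ U p := mul_le_mul_of_nonneg_left h5 hsρ.le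

/-- Jump bound (Proposition 5.2). -/
theorem jump_bound (U Ut : Fin 8 → ℝ) (p pt : ℝ)
    (hU : U ∈ admG) (hUt : Ut ∈ admG) (hp : 0 < p) (hpt : 0 < pt) (ℓ : Fin 3) :
    |Bcomp Ut ℓ - Bcomp U ℓ| / (2 * Real.sqrt ((U 0 + Ut 0) / 2))
      ≤ (1 / 2) * alphaSpeed ℓ U Ut p pt := by
  obtain ⟨hρ, -⟩ := hU
  obtain ⟨hρt, -⟩ := hUt
  set sU : ℝ := Real.sqrt (U 0) with hsUdef
  set sUt : ℝ := Real.sqrt (Ut 0) with hsUtdef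
  set s : ℝ := Real.sqrt ((U 0 + Ut 0) / 2) with hsdef
  have hsU : 0 < sU := Real.sqrt_pos.2 hρ
  have hsUt : 0 < sUt := Real.sqrt_pos.2 hρt
  have hs : 0 < s := Real.sqrt_pos.2 (by linarith)
  have hsUsq : sU ^ 2 = U 0 := Real.sq_sqrt hρ.le
  have hsUtsq : sUt ^ 2 = Ut 0 := Real.sq_sqrt hρt.le
  have hssq : s ^ 2 = (U 0 + Ut 0) / 2 := Real.sq_sqrt (by linarith)
  have hsum : sU + sUt ≤ 2 * s := by
    nlinarith [sq_nonneg (sU - sUt), sq_nonneg (2 * s - (sU + sUt)), hsU, hsUt, hs,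
      sq_nonneg (2 * s + sU + sUt)]
  set c : ℝ := max (Cfast ℓ U p) (Cfast ℓ Ut pt) with hcdef
  have hc0 : 0 ≤ c := le_trans (Cfast_nonneg ℓ U p) (le_max_left _ _)
  have hB1 : |Bcomp U ℓ| ≤ sU * c :=
    le_trans (abs_Bcomp_le ℓ U p hρ)
      (mul_le_mul_of_nonneg_left (le_max_left _ _) hsU.le)
  have hB2 : |Bcomp Ut ℓ| ≤ sUt * c :=
    le_trans (abs_Bcomp_le ℓ Ut pt hρt)
      (mul_le_mul_of_nonneg_left (le_max_right _ _) hsUt.le)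
  have hBl : |Bcomp Ut ℓ - Bcomp U ℓ| ≤ 2 * s * c := by
    calc |Bcomp Ut ℓ - Bcomp U ℓ| ≤ |Bcomp Ut ℓ| + |Bcomp U ℓ| := abs_sub _ _
      _ ≤ sUt * c + sU * c := add_le_add hB2 hB1
      _ = (sU + sUt) * c := by ring
      _ ≤ 2 * s * c := mul_le_mul_of_nonneg_right hsum hc0
  have hT_le_c : |Bcomp Ut ℓ - Bcomp U ℓ| / (2 * s) ≤ c := by
    rw [div_le_iff₀ (by positivity)]
    linarith [hBl]
  -- the jump term
  have hBsum : |Bcomp Ut ℓ - Bcomp U ℓ| ≤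
      Real.sqrt ((Bcomp U 0 - Bcomp Ut 0) ^ 2 + (Bcomp U 1 - Bcomp Ut 1) ^ 2
        + (Bcomp U 2 - Bcomp Ut 2) ^ 2) := by
    rw [← Real.sqrt_sq_eq_abs]
    apply Real.sqrt_le_sqrt
    fin_cases ℓ <;> simp only [Bcomp] <;> norm_num [show (![U 4, U 5, U 6] 2 : ℝ) = U 6 from rfl,
      show (![Ut 4, Ut 5, Ut 6] 2 : ℝ) = Ut 6 from rfl] <;>
      nlinarith [sq_nonneg (U 4 - Ut 4), sq_nonneg (U 5 - Ut 5), sq_nonneg (U 6 - Ut 6)]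
  have hJ : |Bcomp Ut ℓ - Bcomp U ℓ| / (2 * s) ≤
      Real.sqrt ((Bcomp U 0 - Bcomp Ut 0) ^ 2 + (Bcomp U 1 - Bcomp Ut 1) ^ 2
        + (Bcomp U 2 - Bcomp Ut 2) ^ 2) / (sU + sUt) :=
    div_le_div₀ (Real.sqrt_nonneg _) hBsum (by linarith) hsum
  have hM : c ≤ max (max (|vcomp U ℓ| + Cfast ℓ U p) (|vcomp Ut ℓ| + Cfast ℓ Ut pt))
      (|sU * vcomp U ℓ + sUt * vcomp Ut ℓ| / (sU + sUt) + c) :=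
    le_trans (le_add_of_nonneg_left (by positivity)) (le_max_right _ _)
  have halpha : alphaSpeed ℓ U Ut p pt =
      max (max (|vcomp U ℓ| + Cfast ℓ U p) (|vcomp Ut ℓ| + Cfast ℓ Ut pt))
        (|sU * vcomp U ℓ + sUt * vcomp Ut ℓ| / (sU + sUt) + c)
      + Real.sqrt ((Bcomp U 0 - Bcomp Ut 0) ^ 2 + (Bcomp U 1 - Bcomp Ut 1) ^ 2
          + (Bcomp U 2 - Bcomp Ut 2) ^ 2) / (sU + sUt) := rfl
  rw [halpha]
  linarith [hT_le_c, hJ, hM]
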